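/- Let (M, η, μ) be a monad on a category C with binary coproducts. Define M^s = Id + M, η^s = inl : Id ⇒ Id + M, and μ^s = [id_{Id+M}, inr ∘ μ ∘ M[η, id_M]] : M^s M^s ⇒ M^s. Then μ^s ∘ M^s η^s = id_{M^s}, i.e., the left unit law holds for the semifree monad. -/

import Mathlib

open CategoryTheory CategoryTheory.Limits

universe v u

variable {C : Type u} [Category.{v} C] [HasBinaryCoproducts C]

/-- The underlying functor `Id + M` of the semifree monad. -/
noncomputable def MsF (M : Monad C) : C ⥤ C where
  obj X := X ⨿ M.obj X
  map f := coprod.map f (M.map f)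

/-- The unit of the semifree monad: the left coproduct injection. -/
noncomputable def ηs (M : Monad C) (X : C) : X ⟶ (MsF M).obj X := coprod.inl

/-- The multiplication of the semifree monad:
`μ^s = [id, inr ∘ μ ∘ M[η, id_M]]`. -/
noncomputable def μs (M : Monad C) (X : C) : (MsF M).obj ((MsF M).obj X) ⟶ (MsF M).obj X :=
  coprod.desc (𝟙 ((MsF M).obj X))
    (M.map (coprod.desc (M.η.app X) (𝟙 (M.obj X))) ≫ M.μ.app X ≫ coprod.inr)

/-- Left unit law for the semifree monad: `μ^s ∘ M^s η^s = id`. -/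
theorem semifree_left_unit (M : Monad C) (X : C) :
    (MsF M).map (ηs M X) ≫ μs M X = 𝟙 ((MsF M).obj X) := by
  simp only [MsF, ηs, μs]
  ext
  · simp only [coprod.inl_map_assoc, coprod.inl_desc, Category.comp_id]
  · simp only [coprod.inr_map_assoc, coprod.inr_desc]
    rw [← M.map_comp_assoc, coprod.inl_desc, Monad.right_unit_assoc]
    simp
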